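/- The only pairs of coprime integers (c, d) with 3 ∣ c, c ≠ 0, and c²/3 + d² + (2/√3)·cd·cos(5π/6) = 1 are (c, d) = ±(3, 1) and ±(3, 2). -/
import Mathlib


open Real

theorem boundary_pairs_p_three (c d : ℤ) (hcop : IsCoprime c d) (hc3 : 3 ∣ c)
    (hc0 : c ≠ 0) :
    (c : ℝ) ^ 2 / 3 + (d : ℝ) ^ 2 + (2 / Real.sqrt 3) * c * d * Real.cos (5 * π / 6) = 1 ↔
      ((c, d) = (3, 1) ∨ (c, d) = (-3, -1) ∨ (c, d) = (3, 2) ∨ (c, d) = (-3, -2)) := by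
  have hs : Real.sqrt 3 ≠ 0 := by positivity
  have hss : Real.sqrt 3 * Real.sqrt 3 = 3 := Real.mul_self_sqrt (by norm_num)
  have hcos : Real.cos (5 * π / 6) = -(Real.sqrt 3 / 2) := by
    have : (5 : ℝ) * π / 6 = π - π / 6 := by ring
    rw [this, Real.cos_pi_sub, Real.cos_pi_div_six]
  have key : (c : ℝ) ^ 2 / 3 + (d : ℝ) ^ 2 + (2 / Real.sqrt 3) * c * d * Real.cos (5 * π / 6)
      = (c : ℝ) ^ 2 / 3 + (d : ℝ) ^ 2 - c * d := by
    rw [hcos]; field_simp; ring_nf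
  rw [key]
  constructor
  · intro h
    have hZ : c ^ 2 + 3 * d ^ 2 - 3 * (c * d) = 3 := by
      have : (c : ℝ) ^ 2 + 3 * d ^ 2 - 3 * (c * d) = 3 := by linarith
      exact_mod_cast this
    obtain ⟨e, rfl⟩ := hc3
    have he : 3 * e ^ 2 + d ^ 2 - 3 * (e * d) = 1 := by nlinarith
    have hb : e ^ 2 ≤ 1 := by nlinarith [sq_nonneg (2 * d - 3 * e)]
    have hb3 : -1 ≤ e := by nlinarith [sq_nonneg (e + 1)]
    have hb4 : e ≤ 1 := by nlinarith [sq_nonneg (e - 1)]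
    have he0 : e ≠ 0 := by rintro rfl; simp at hc0
    interval_cases e
    · have hd : (d + 1) * (d + 2) = 0 := by nlinarith
      rcases mul_eq_zero.mp hd with h1 | h1 <;> simp_all <;> omega
    · exact absurd rfl he0
    · have hd : (d - 1) * (d - 2) = 0 := by nlinarith
      rcases mul_eq_zero.mp hd with h1 | h1 <;> simp_all <;> omega
  · rintro (h | h | h | h) <;>
      (simp only [Prod.mk.injEq] at h; obtain ⟨rfl, rfl⟩ := h) <;> norm_num
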